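/- Each equivalence class of ∼ in S contains exactly one Dyck vector, i.e., exactly one vector all of whose entries are strictly positive. -/

import Mathlib

/-- An area vector: `g i.succ ≤ g i.castSucc + m` for all consecutive indices. -/
def IsAreaVec {n : ℕ} (m : ℝ) (g : Fin (n + 1) → ℝ) : Prop :=
  ∀ i : Fin n, g i.succ ≤ g i.castSucc + m

/-- The cycling operator `C(g₀,…,g_{n-1}) = (g₁,…,g_{n-1}, g₀ - c)`. -/
def cyc {n : ℕ} (c : ℝ) (g : Fin (n + 1) → ℝ) : Fin (n + 1) → ℝ :=
  fun i => if h : (i : ℕ) + 1 < n + 1 then g ⟨(i : ℕ) + 1, h⟩ else g 0 - c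

/-- The inverse cycling operator. -/
def cycInv {n : ℕ} (c : ℝ) (g : Fin (n + 1) → ℝ) : Fin (n + 1) → ℝ :=
  fun i => if 0 < (i : ℕ) then
      g ⟨(i : ℕ) - 1, Nat.lt_of_le_of_lt (Nat.sub_le _ _) i.isLt⟩
    else g (Fin.last n) + c

/-- Integer iterates `C^j` of the cycling operator. -/
def cycIter {n : ℕ} (c : ℝ) (j : ℤ) (g : Fin (n + 1) → ℝ) : Fin (n + 1) → ℝ :=
  if 0 ≤ j then (cyc c)^[j.toNat] g else (cycInv c)^[(-j).toNat] g

/-- Membership in the set `S`: an area vector with values in `G`, `g 0 ≤ c`,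
and last entry positive. -/
def MemS {n : ℕ} (G : AddSubgroup ℝ) (c m : ℝ) (g : Fin (n + 1) → ℝ) : Prop :=
  (∀ i, g i ∈ G) ∧ IsAreaVec m g ∧ g 0 ≤ c ∧ 0 < g (Fin.last n)

/-! ### Auxiliary machinery: the bi-infinite extension of `g`. -/

/-- The bi-infinite extension of `g`, periodic with drift `-c`. -/
noncomputable def fseq (n : ℕ) (c : ℝ) (g : Fin (n + 1) → ℝ) (i : ℤ) : ℝ :=
  g ⟨(i % ((n : ℤ) + 1)).toNat, by
      have h1 : i % ((n : ℤ) + 1) < (n : ℤ) + 1 :=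
        Int.emod_lt_of_pos i (by positivity)
      exact (Int.toNat_lt' (Nat.succ_pos n)).mpr (by exact_mod_cast h1)⟩
    - c * ((i / ((n : ℤ) + 1) : ℤ) : ℝ)

section Aux

variable {n : ℕ} {c m : ℝ} {g : Fin (n + 1) → ℝ}

lemma fseq_zsmul (i q : ℤ) :
    fseq n c g (i + q * ((n : ℤ) + 1)) = fseq n c g i - (q : ℝ) * c := by
  have hN : ((n : ℤ) + 1) ≠ 0 := by positivity
  have h1 : (i + q * ((n:ℤ)+1)) % ((n:ℤ)+1) = i % ((n:ℤ)+1) := by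
    rw [show i + q * ((n:ℤ)+1) = i + ((n:ℤ)+1) * q by ring, Int.add_mul_emod_self_left]
  have h2 : (i + q * ((n:ℤ)+1)) / ((n:ℤ)+1) = i / ((n:ℤ)+1) + q :=
    Int.add_mul_ediv_right i q hN
  simp only [fseq, h1, h2, Int.cast_add]
  ring

lemma fseq_period (i : ℤ) :
    fseq n c g (i + ((n : ℤ) + 1)) = fseq n c g i - c := by
  have := fseq_zsmul (n := n) (c := c) (g := g) i 1
  simpa using this

lemma fseq_nat {k : ℕ} (hk : k < n + 1) :
    fseq n c g (k : ℤ) = g ⟨k, hk⟩ := by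
  have h1 : (k : ℤ) % ((n:ℤ)+1) = (k : ℤ) :=
    Int.emod_eq_of_lt (by positivity) (by exact_mod_cast hk)
  have h2 : (k : ℤ) / ((n:ℤ)+1) = 0 :=
    Int.ediv_eq_zero_of_lt (by positivity) (by exact_mod_cast hk)
  simp only [fseq, h1, h2, Int.cast_zero, mul_zero, sub_zero, Int.toNat_natCast]

lemma fseq_coe (k : Fin (n + 1)) : fseq n c g ((k : ℕ) : ℤ) = g k :=
  (fseq_nat k.isLt).trans (by simp)

/-- The one-step area inequality holds everywhere on the extension. -/
lemma fseq_step (harea : IsAreaVec m g) (hg0 : g 0 ≤ c) (hgn : 0 < g (Fin.last n))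
    (hm : 0 ≤ m) (hc : 0 < c) (i : ℤ) :
    fseq n c g (i + 1) ≤ fseq n c g i + m := by
  obtain ⟨r, q, hr0, hrn, hi⟩ :
      ∃ r q : ℤ, 0 ≤ r ∧ r < (n:ℤ)+1 ∧ i = r + q * ((n:ℤ)+1) := by
    refine ⟨i % ((n:ℤ)+1), i / ((n:ℤ)+1),
      Int.emod_nonneg i (by positivity : (0:ℤ) < (n:ℤ)+1).ne',
      Int.emod_lt_of_pos i (by positivity), ?_⟩
    have := Int.emod_add_mul_ediv i ((n:ℤ)+1)
    linarith
  have h1 : fseq n c g i = fseq n c g r - (q : ℝ) * c := by rw [hi, fseq_zsmul]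
  have h2 : fseq n c g (i + 1) = fseq n c g (r + 1) - (q : ℝ) * c := by
    rw [show i + 1 = (r + 1) + q * ((n:ℤ)+1) by rw [hi]; ring, fseq_zsmul]
  have key : fseq n c g (r + 1) ≤ fseq n c g r + m := by
    by_cases hrtop : r = (n : ℤ)
    · have e1 : fseq n c g (r + 1) = fseq n c g 0 - c := by
        rw [show r + 1 = (0 : ℤ) + ((n:ℤ)+1) by rw [hrtop]; ring, fseq_period]
      have e0 : fseq n c g (0 : ℤ) = g 0 := by
        have := fseq_nat (n := n) (c := c) (g := g) (k := 0) (Nat.succ_pos n)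
        simpa using this
      have en : fseq n c g r = g (Fin.last n) := by
        rw [hrtop]
        have := fseq_nat (n := n) (c := c) (g := g) (k := n) (Nat.lt_succ_self n)
        simpa [Fin.last] using this
      rw [e1, e0, en]
      linarith
    · have hrn' : r < (n : ℤ) := by omega
      lift r to ℕ using hr0 with k hkr
      have hkn : k < n := by exact_mod_cast hrn'
      have e1 : fseq n c g (k : ℤ) = g ⟨k, by omega⟩ := fseq_nat (by omega)
      have e2 : fseq n c g (((k + 1 : ℕ)) : ℤ) = g ⟨k + 1, by omega⟩ :=
        fseq_nat (by omega)
      have harea' := harea ⟨k, hkn⟩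
      rw [show (k:ℤ) + 1 = ((k + 1 : ℕ) : ℤ) by push_cast; ring, e2, e1]
      exact harea'
  linarith

lemma fseq_mem {G : AddSubgroup ℝ} (hG : ∀ i, g i ∈ G) (hcG : c ∈ G) (i : ℤ) :
    fseq n c g i ∈ G := by
  refine sub_mem (hG _) ?_
  have := G.zsmul_mem hcG (i / ((n:ℤ)+1))
  simpa [zsmul_eq_mul, mul_comm] using this

/-- `cyc` shifts a window of `fseq`. -/
lemma cyc_window (j : ℤ) :
    cyc c (fun k : Fin (n + 1) => fseq n c g (j + ((k : ℕ) : ℤ))) =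
      fun k : Fin (n + 1) => fseq n c g ((j + 1) + ((k : ℕ) : ℤ)) := by
  funext k
  simp only [cyc]
  split
  · rename_i hlt
    congr 1
    show j + (((k : ℕ) + 1 : ℕ) : ℤ) = (j + 1) + ((k : ℕ) : ℤ)
    push_cast
    ring
  · rename_i hge
    have hk : (k : ℕ) = n := by have := k.isLt; omega
    have harg : (j + 1) + ((k : ℕ) : ℤ) = j + ((n : ℤ) + 1) := by
      rw [hk]; push_cast; ring
    rw [harg, fseq_period]
    simp

/-- `cycInv` shifts a window of `fseq` backwards. -/
lemma cycInv_window (j : ℤ) :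
    cycInv c (fun k : Fin (n + 1) => fseq n c g (j + ((k : ℕ) : ℤ))) =
      fun k : Fin (n + 1) => fseq n c g ((j - 1) + ((k : ℕ) : ℤ)) := by
  funext k
  simp only [cycInv]
  split
  · rename_i hpos
    congr 1
    show j + ((((k : ℕ) - 1 : ℕ)) : ℤ) = (j - 1) + ((k : ℕ) : ℤ)
    omega
  · rename_i hz
    have hk : (k : ℕ) = 0 := by omega
    have hp := fseq_period (n := n) (c := c) (g := g) (j - 1)
    show fseq n c g (j + (((Fin.last n : Fin (n+1)) : ℕ) : ℤ)) + c
        = fseq n c g ((j - 1) + ((k : ℕ) : ℤ))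
    rw [show (j - 1) + ((k : ℕ) : ℤ) = j - 1 by rw [hk]; simp]
    rw [show j + (((Fin.last n : Fin (n+1)) : ℕ) : ℤ) = (j - 1) + ((n:ℤ)+1) by
      simp only [Fin.val_last]; push_cast; ring]
    rw [hp]
    ring

lemma cyc_iter_window (j : ℤ) (t : ℕ) :
    (cyc c)^[t] (fun k : Fin (n + 1) => fseq n c g (j + ((k : ℕ) : ℤ))) =
      fun k : Fin (n + 1) => fseq n c g ((j + (t : ℤ)) + ((k : ℕ) : ℤ)) := by
  induction t with
  | zero => simp
  | succ t ih =>
      rw [Function.iterate_succ_apply', ih, cyc_window]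
      funext k
      congr 2
      push_cast
      ring

lemma cycInv_iter_window (j : ℤ) (t : ℕ) :
    (cycInv c)^[t] (fun k : Fin (n + 1) => fseq n c g (j + ((k : ℕ) : ℤ))) =
      fun k : Fin (n + 1) => fseq n c g ((j - (t : ℤ)) + ((k : ℕ) : ℤ)) := by
  induction t with
  | zero => simp
  | succ t ih =>
      rw [Function.iterate_succ_apply', ih, cycInv_window]
      funext k
      congr 2
      push_cast
      ring

lemma cycIter_eq (j : ℤ) :
    cycIter c j g = fun k : Fin (n + 1) => fseq n c g (j + ((k : ℕ) : ℤ)) := by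
  have hg0 : g = fun k : Fin (n + 1) => fseq n c g ((0 : ℤ) + ((k : ℕ) : ℤ)) := by
    funext k
    rw [zero_add, fseq_coe]
  rw [cycIter]
  split
  · rename_i hj
    conv_lhs => rw [hg0]
    rw [cyc_iter_window]
    funext k
    congr 2
    simp [Int.toNat_of_nonneg hj]
  · rename_i hj
    conv_lhs => rw [hg0]
    rw [cycInv_iter_window]
    funext k
    congr 2
    have h0 : 0 ≤ -j := by omega
    simp [Int.toNat_of_nonneg h0]

end Aux

/-- each equivalence class of `∼` in `S` contains exactly one Dyck
vector (a vector all of whose entries are strictly positive). -/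
theorem stmt4 (n : ℕ) (G : AddSubgroup ℝ) (c m : ℝ)
    (hcG : c ∈ G) (hmG : m ∈ G) (hc : 0 < c) (hm : 0 ≤ m)
    (g : Fin (n + 1) → ℝ) (hg : MemS G c m g) :
    ∃! h : Fin (n + 1) → ℝ,
      MemS G c m h ∧ (∃ j : ℤ, h = cycIter c j g) ∧ (∀ i, 0 < h i) := by
  obtain ⟨hGmem, harea, hg0, hgn⟩ := hg
  have step : ∀ i : ℤ, fseq n c g (i + 1) ≤ fseq n c g i + m :=
    fun i => fseq_step harea hg0 hgn hm hc i
  set P : ℤ → Prop := fun j => ∀ k : Fin (n + 1), 0 < fseq n c g (j + ((k : ℕ) : ℤ)) with hP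
  -- P is satisfiable
  have hPne : ∃ j, P j := by
    obtain ⟨A, hA⟩ : ∃ A : ℝ, ∀ k : Fin (n + 1), -g k ≤ A :=
      ⟨Finset.univ.sup' Finset.univ_nonempty (fun k => -g k),
        fun k => Finset.le_sup' (fun k => -g k) (Finset.mem_univ k)⟩
    obtain ⟨K, hK⟩ := exists_nat_gt (A / c)
    have hAc : A < K * c := by
      rw [div_lt_iff₀ hc] at hK; exact hK
    refine ⟨-(K : ℤ) * ((n:ℤ)+1), fun k => ?_⟩
    have harg : -(K : ℤ) * ((n:ℤ)+1) + ((k : ℕ) : ℤ) = ((k : ℕ) : ℤ) + (-(K:ℤ)) * ((n:ℤ)+1) := by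
      ring
    rw [harg, fseq_zsmul, fseq_coe]
    have := hA k
    push_cast
    linarith
  -- P is bounded above
  have hPbdd : ∃ b : ℤ, ∀ j, P j → j ≤ b := by
    obtain ⟨B, hB⟩ : ∃ B : ℝ, ∀ k : Fin (n + 1), g k ≤ B :=
      ⟨Finset.univ.sup' Finset.univ_nonempty g,
        fun k => Finset.le_sup' g (Finset.mem_univ k)⟩
    obtain ⟨Q, hQ⟩ := exists_nat_gt (B / c)
    have hBc : B < Q * c := by rw [div_lt_iff₀ hc] at hQ; exact hQ
    refine ⟨((n:ℤ)+1) * Q, fun j hj => ?_⟩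
    by_contra hlt
    push_neg at hlt
    have h0 := hj 0
    simp only [Fin.val_zero, Nat.cast_zero, add_zero] at h0
    have hq : (Q : ℤ) ≤ j / ((n:ℤ)+1) := by
      rw [Int.le_ediv_iff_mul_le (by positivity), mul_comm]
      exact hlt.le
    have hdec : fseq n c g j = fseq n c g (j % ((n:ℤ)+1))
        - ((j / ((n:ℤ)+1) : ℤ) : ℝ) * c := by
      conv_lhs => rw [show j = j % ((n:ℤ)+1) + (j / ((n:ℤ)+1)) * ((n:ℤ)+1) by
        have := Int.emod_add_mul_ediv j ((n:ℤ)+1); linarith]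
      rw [fseq_zsmul]
    have hr0 : 0 ≤ j % ((n:ℤ)+1) := Int.emod_nonneg j (by positivity : (0:ℤ) < (n:ℤ)+1).ne'
    have hrn : j % ((n:ℤ)+1) < (n:ℤ)+1 := Int.emod_lt_of_pos j (by positivity)
    have hrb : fseq n c g (j % ((n:ℤ)+1)) ≤ B := by
      have hcast : (((j % ((n:ℤ)+1)).toNat : ℕ) : ℤ) = j % ((n:ℤ)+1) :=
        Int.toNat_of_nonneg hr0
      have hlt2 : (j % ((n:ℤ)+1)).toNat < n + 1 := by omega
      have := fseq_nat (n := n) (c := c) (g := g) hlt2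
      rw [hcast] at this
      rw [this]
      exact hB _
    have hqc : (Q : ℝ) * c ≤ ((j / ((n:ℤ)+1) : ℤ) : ℝ) * c := by
      have h' : ((Q : ℕ) : ℝ) ≤ ((j / ((n:ℤ)+1) : ℤ) : ℝ) := by exact_mod_cast hq
      exact mul_le_mul_of_nonneg_right h' hc.le
    linarith
  obtain ⟨j₀, hPj, hmax⟩ := Int.exists_greatest_of_bdd hPbdd hPne
  -- the head of the found window is at most `c`
  have hhead : fseq n c g j₀ ≤ c := by
    have hnot : ¬ ∀ k : Fin (n + 1), 0 < fseq n c g (j₀ + 1 + ((k : ℕ) : ℤ)) :=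
      fun hp => by have := hmax _ hp; omega
    push_neg at hnot
    obtain ⟨k, hk⟩ := hnot
    by_cases hkn : (k : ℕ) = n
    · have harg : j₀ + 1 + ((k : ℕ) : ℤ) = j₀ + ((n:ℤ)+1) := by rw [hkn]; push_cast; ring
      rw [harg, fseq_period] at hk
      linarith
    · exfalso
      have hlt : (k : ℕ) < n := by have := k.isLt; omega
      have h2 : (0:ℝ) < fseq n c g (j₀ + ((((k:ℕ) + 1 : ℕ)) : ℤ)) := hPj ⟨(k:ℕ) + 1, by omega⟩
      rw [show j₀ + ((((k:ℕ) + 1 : ℕ)) : ℤ) = j₀ + 1 + ((k : ℕ) : ℤ) by push_cast; ring] at h2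
      linarith
  -- uniqueness of a "good" shift
  have huniq : ∀ j j' : ℤ, P j → P j' →
      fseq n c g j ≤ c → fseq n c g j' ≤ c → j = j' := by
    have key : ∀ j j' : ℤ, j < j' → P j' → fseq n c g j ≤ c → False := by
      intro j j' hlt hj' h1
      obtain ⟨r, q, hr0, hrn, heq⟩ :
          ∃ r q : ℤ, 0 ≤ r ∧ r < (n:ℤ)+1 ∧ ((n:ℤ)+1) * q + r = j' - j + n := by
        exact ⟨(j' - j + n) % ((n:ℤ)+1), (j' - j + n) / ((n:ℤ)+1),
          Int.emod_nonneg _ (by positivity : (0:ℤ) < (n:ℤ)+1).ne',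
          Int.emod_lt_of_pos _ (by positivity),
          Int.mul_ediv_add_emod _ _⟩
      have hq1 : 1 ≤ q := by
        by_contra hq0
        push_neg at hq0
        have hq0' : q ≤ 0 := by omega
        have hnp : ((n:ℤ)+1) * q ≤ 0 :=
          mul_nonpos_iff.mpr (Or.inl ⟨by positivity, hq0'⟩)
        have hjj : j + 1 ≤ j' := hlt
        linarith
      have hFt : fseq n c g (j + q * ((n:ℤ)+1)) = fseq n c g j - (q:ℝ) * c :=
        fseq_zsmul j q
      have hle : fseq n c g (j + q * ((n:ℤ)+1)) ≤ 0 := by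
        rw [hFt]
        have hq1' : (1 : ℝ) ≤ (q : ℝ) := by exact_mod_cast hq1
        nlinarith
      have hd0 : 0 ≤ (n : ℤ) - r := by omega
      have hbound : ((n:ℤ) - r).toNat < n + 1 := by omega
      have h2 : (0:ℝ) < fseq n c g (j' + ((((n:ℤ) - r).toNat : ℕ) : ℤ)) :=
        hj' ⟨((n:ℤ) - r).toNat, hbound⟩
      rw [Int.toNat_of_nonneg hd0] at h2
      have hidx : j + q * ((n:ℤ)+1) = j' + ((n:ℤ) - r) := by linarith
      rw [hidx] at hle
      linarith
    intro j j' hj hj' h1 h2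
    rcases lt_trichotomy j j' with h | h | h
    · exact absurd (key j j' h hj' h1) not_false
    · exact h
    · exact absurd (key j' j h hj h2) not_false
  -- the Dyck vector
  refine ⟨fun k : Fin (n + 1) => fseq n c g (j₀ + ((k : ℕ) : ℤ)),
    ⟨⟨?_, ?_, ?_, ?_⟩, ⟨j₀, (cycIter_eq j₀).symm⟩, ?_⟩, ?_⟩
  · intro i
    exact fseq_mem hGmem hcG _
  · intro i
    show fseq n c g (j₀ + ((i.succ : ℕ) : ℤ)) ≤ fseq n c g (j₀ + ((i.castSucc : ℕ) : ℤ)) + m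
    rw [show j₀ + ((i.succ : ℕ) : ℤ) = (j₀ + ((i.castSucc : ℕ) : ℤ)) + 1 by
      simp only [Fin.val_succ, Fin.coe_castSucc]; push_cast; ring]
    exact step _
  · show fseq n c g (j₀ + (((0 : Fin (n+1)) : ℕ) : ℤ)) ≤ c
    simpa using hhead
  · exact hPj _
  · exact hPj
  · rintro h' ⟨⟨hG', harea', h0', hn'⟩, ⟨j', hj'eq⟩, hpos'⟩
    have hh' : h' = fun k : Fin (n + 1) => fseq n c g (j' + ((k : ℕ) : ℤ)) := by
      rw [hj'eq]; exact cycIter_eq j'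
    have hPj' : P j' := by
      intro k
      have := hpos' k
      rw [hh'] at this
      exact this
    have hhead' : fseq n c g j' ≤ c := by
      have h0'' := h0'
      rw [hh'] at h0''
      simpa using h0''
    have hjj : j' = j₀ := huniq j' j₀ hPj' hPj hhead' hhead
    rw [hh', hjj]
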